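/- Let y be obtained from a binary string x by deleting one symbol equal to 0 and one symbol equal to 1. If N_{0000}(x) − N_{0000}(y) ≡ 1 (mod 7) and N_{1111}(x) ≡ N_{1111}(y) (mod 7), then the string 1111 is preserved from x to y. -/

import Mathlib

/-- Delete from `x` the symbols at the positions in `S`. -/
def deleteIdxs (x : List Bool) (S : Finset ℕ) : List Bool :=
  ((List.range x.length).filter (fun i => decide (i ∉ S))).map (fun i => x.getD i false)

/-- `w` occurs in `x` at position `i`. -/
def occursAt (w x : List Bool) (i : ℕ) : Prop := w <+: x.drop i

/-- The number of (possibly overlapping) occurrences of `w` in `x`. -/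
def Nw (w x : List Bool) : ℕ :=
  ((Finset.range x.length).filter (fun i => w <+: x.drop i)).card

/-- The position in the shortened string of the junction produced by deleting position `k`. -/
def junction (S : Finset ℕ) (k : ℕ) : ℕ :=
  ((Finset.range k).filter (fun m => m ∉ S)).card

/-- `w` is preserved from `x` to `y`: some set `S` of deleted positions realizing `y`
destroys no occurrence of `w` in `x` and no occurrence of `w` in `y` spans a junction. -/
def Preserved (w x y : List Bool) : Prop :=
  ∃ S : Finset ℕ,
    (∀ k ∈ S, k < x.length) ∧
    S.card + y.length = x.length ∧
    deleteIdxs x S = y ∧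
    (∀ i, occursAt w x i → ∀ k ∈ S, ¬ (i ≤ k ∧ k < i + w.length)) ∧
    (∀ j, occursAt w y j → ∀ k ∈ S, ¬ (j < junction S k ∧ junction S k < j + w.length))

/-- `x` has a (maximal) run of length `ℓ` starting at position `i`. -/
def runAt (x : List Bool) (i ℓ : ℕ) : Prop :=
  0 < ℓ ∧ i + ℓ ≤ x.length ∧
  (∀ j, i ≤ j → j < i + ℓ → x.getD j false = x.getD i false) ∧
  (i = 0 ∨ x.getD (i - 1) false ≠ x.getD i false) ∧
  (i + ℓ = x.length ∨ x.getD (i + ℓ) false ≠ x.getD i false)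

/-- position `k` of `x` lies in a run of length `ℓ`. -/
def inRun (x : List Bool) (k ℓ : ℕ) : Prop := ∃ i, runAt x i ℓ ∧ i ≤ k ∧ k < i + ℓ

def w0000 : List Bool := [false, false, false, false]
def w1111 : List Bool := [true, true, true, true]
def w11011 : List Bool := [true, true, false, true, true]
def w110011 : List Bool := [true, true, false, false, true, true]

/-- The set of strings obtainable from `x` by deleting two symbols. -/
def D2 (x : List Bool) : Set (List Bool) :=
  { y | ∃ i j : ℕ, i < j ∧ j < x.length ∧ y = deleteIdxs x ({i, j} : Finset ℕ) }

/-- run-length representation of the runs of ones, in order. -/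
def tau1 (x : List Bool) : List ℕ :=
  ((x.splitBy (· == ·)).filter (fun r => r.headD false)).map List.length

/-- the subsequence of `tau1` of entries at least 2. -/
def tauGe2 (x : List Bool) : List ℕ := (tau1 x).filter (fun ℓ => decide (2 ≤ ℓ))

/-- sum of the odd-indexed entries. -/
def oddIdxSum (l : List ℕ) : ℕ :=
  ((Finset.range l.length).filter (fun i => i % 2 = 1)).sum (fun i => l.getD i 0)



lemma getD_true_lt {x : List Bool} {i : ℕ} (h : x.getD i false = true) : i < x.length := by
  by_contra hc
  rw [List.getD_eq_default _ _ (by omega)] at h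
  exact Bool.false_ne_true h

lemma occ_iff {w x : List Bool} (hw : 0 < w.length) {i : ℕ} :
    occursAt w x i ↔ (i + w.length ≤ x.length ∧
      ∀ d < w.length, x.getD (i+d) false = w.getD d false) := by
  unfold occursAt
  rw [List.prefix_iff_eq_take]
  constructor
  · intro h
    have hl := congrArg List.length h
    simp only [List.length_take, List.length_drop] at hl
    have hlen : i + w.length ≤ x.length := by omega
    refine ⟨hlen, fun d hd => ?_⟩
    have hd2 : i + d < x.length := by omega
    rw [List.getD_eq_getElem _ _ hd, List.getD_eq_getElem _ _ hd2]
    have h3 : d < (List.take w.length (List.drop i x)).length := by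
      simp [List.length_take, List.length_drop]; omega
    rw [List.getElem_of_eq h hd]
    rw [List.getElem_take, List.getElem_drop]
  · rintro ⟨hlen, hval⟩
    apply List.ext_getElem
    · simp only [List.length_take, List.length_drop]; omega
    · intro d h1 h2
      have hd : d < w.length := h1
      have hd2 : i + d < x.length := by omega
      rw [List.getElem_take, List.getElem_drop]
      have := hval d hd
      rw [List.getD_eq_getElem _ _ hd2, List.getD_eq_getElem _ _ hd] at this
      exact this.symm

lemma getD_erase (x : List Bool) (k : ℕ) (hk : k < x.length) (t : ℕ) :
    (x.eraseIdx k).getD t false = if t < k then x.getD t false else x.getD (t+1) false := by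
  induction x generalizing k t with
  | nil => simp at hk
  | cons a xs ih =>
    cases k with
    | zero => simp [List.eraseIdx]
    | succ k =>
      cases t with
      | zero => simp
      | succ t =>
        rw [List.eraseIdx_cons_succ, List.getD_cons_succ, List.getD_cons_succ,
          ih k (by simpa using hk) t]
        simp [Nat.succ_lt_succ_iff]


def cov (w x : List Bool) (k : ℕ) : Finset ℕ :=
  (Finset.range x.length).filter (fun i => w <+: x.drop i ∧ i ≤ k ∧ k < i + w.length)

def spn (w x : List Bool) (k : ℕ) : Finset ℕ :=
  (Finset.range (x.eraseIdx k).length).filter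
    (fun j => w <+: (x.eraseIdx k).drop j ∧ j < k ∧ k < j + w.length)

lemma count_lemma (w x : List Bool) (k : ℕ) (hw : 0 < w.length) (hk : k < x.length) :
    Nw w x + (spn w x k).card = Nw w (x.eraseIdx k) + (cov w x k).card := by
  classical
  set n := x.length with hn
  set z := x.eraseIdx k with hz
  have hzl : z.length = n - 1 := by rw [hz, List.length_eraseIdx]; split_ifs <;> omega
  have hzd : ∀ t, z.getD t false = if t < k then x.getD t false else x.getD (t+1) false :=
    getD_erase x k hk
  -- split Nw x
  have e1 : Nw w x = (cov w x k).card +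
      ((Finset.range n).filter (fun i => (w <+: x.drop i) ∧ ¬ (i ≤ k ∧ k < i + w.length))).card := by
    rw [Nw, cov,
      ← Finset.filter_filter (fun i => w <+: x.drop i) (fun i => i ≤ k ∧ k < i + w.length),
      ← Finset.filter_filter (fun i => w <+: x.drop i) (fun i => ¬ (i ≤ k ∧ k < i + w.length))]
    exact (Finset.card_filter_add_card_filter_not (fun i => i ≤ k ∧ k < i + w.length)).symm
  have e2 : Nw w z = (spn w x k).card +
      ((Finset.range z.length).filter (fun j => (w <+: z.drop j) ∧ ¬ (j < k ∧ k < j + w.length))).card := by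
    rw [Nw, spn,
      ← Finset.filter_filter (fun j => w <+: z.drop j) (fun j => j < k ∧ k < j + w.length),
      ← Finset.filter_filter (fun j => w <+: z.drop j) (fun j => ¬ (j < k ∧ k < j + w.length))]
    exact (Finset.card_filter_add_card_filter_not (fun j => j < k ∧ k < j + w.length)).symm
  have key : ((Finset.range n).filter (fun i => (w <+: x.drop i) ∧ ¬ (i ≤ k ∧ k < i + w.length))).card
      = ((Finset.range z.length).filter (fun j => (w <+: z.drop j) ∧ ¬ (j < k ∧ k < j + w.length))).card := by
    apply Finset.card_bij' (i := fun a _ => if a ≤ k then a else a - 1)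
      (j := fun b _ => if b < k then b else b + 1)
    · intro a ha
      simp only [Finset.mem_filter, Finset.mem_range] at ha ⊢
      obtain ⟨han, hocc, hnc⟩ := ha
      rw [show ((w <+: x.drop a) = occursAt w x a) from rfl, occ_iff hw] at hocc
      obtain ⟨hlen, hval⟩ := hocc
      rcases Nat.lt_or_ge k (a) with hak | hak
      · -- a > k
        have h1 : ¬ (a ≤ k) := by omega
        rw [if_neg h1]
        refine ⟨by omega, ?_, by omega⟩
        rw [show ((w <+: z.drop (a-1)) = occursAt w z (a-1)) from rfl, occ_iff hw]
        refine ⟨by omega, fun d hd => ?_⟩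
        rw [hzd]
        rw [if_neg (by omega), show a - 1 + d + 1 = a + d by omega]
        exact hval d hd
      · -- a ≤ k, so a + L ≤ k
        have hak2 : a + w.length ≤ k := by omega
        rw [if_pos hak]
        refine ⟨by omega, ?_, by omega⟩
        rw [show ((w <+: z.drop a) = occursAt w z a) from rfl, occ_iff hw]
        refine ⟨by omega, fun d hd => ?_⟩
        rw [hzd, if_pos (by omega)]
        exact hval d hd
    · intro b hb
      simp only [Finset.mem_filter, Finset.mem_range] at hb ⊢
      obtain ⟨hbn, hocc, hnc⟩ := hb
      rw [show ((w <+: z.drop b) = occursAt w z b) from rfl, occ_iff hw] at hocc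
      obtain ⟨hlen, hval⟩ := hocc
      rcases Nat.lt_or_ge b k with hbk | hbk
      · -- b < k, so b + L ≤ k
        have hbk2 : b + w.length ≤ k := by omega
        rw [if_pos hbk]
        refine ⟨by omega, ?_, by omega⟩
        rw [show ((w <+: x.drop b) = occursAt w x b) from rfl, occ_iff hw]
        refine ⟨by omega, fun d hd => ?_⟩
        have := hval d hd
        rw [hzd, if_pos (by omega)] at this
        exact this
      · rw [if_neg (by omega)]
        refine ⟨by omega, ?_, by omega⟩
        rw [show ((w <+: x.drop (b+1)) = occursAt w x (b+1)) from rfl, occ_iff hw]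
        refine ⟨by omega, fun d hd => ?_⟩
        have := hval d hd
        rw [hzd, if_neg (by omega), show b + d + 1 = b + 1 + d by omega] at this
        exact this
    · intro a ha
      simp only [Finset.mem_filter, Finset.mem_range] at ha
      obtain ⟨han, hocc, hnc⟩ := ha
      have hak : a ≠ k := by rintro rfl; exact hnc ⟨le_refl _, by omega⟩
      split_ifs <;> omega
    · intro b hb
      simp only [Finset.mem_filter, Finset.mem_range] at hb
      obtain ⟨hbn, hocc, hnc⟩ := hb
      split_ifs <;> omega
  omega

lemma cov_card_le (w x : List Bool) (k : ℕ) : (cov w x k).card ≤ w.length := by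
  have hsub : cov w x k ⊆ Finset.Icc (k + 1 - w.length) k := by
    intro i hi
    simp only [cov, Finset.mem_filter, Finset.mem_range] at hi
    simp only [Finset.mem_Icc]
    omega
  have := Finset.card_le_card hsub
  rw [Nat.card_Icc] at this
  omega

lemma spn_card_le (w x : List Bool) (k : ℕ) : (spn w x k).card ≤ w.length - 1 := by
  have hsub : spn w x k ⊆ Finset.Ico (k + 1 - w.length) k := by
    intro j hj
    simp only [spn, Finset.mem_filter, Finset.mem_range] at hj
    simp only [Finset.mem_Ico]
    omega
  have := Finset.card_le_card hsub
  rw [Nat.card_Ico] at this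
  omega

lemma cov_empty_of_ne {w x : List Bool} {k : ℕ} {b : Bool} (hw : 0 < w.length)
    (hb : x.getD k false = b) (hrep : ∀ d < w.length, w.getD d false = (!b)) :
    cov w x k = ∅ := by
  ext i
  simp only [cov, Finset.mem_filter, Finset.mem_range, Finset.notMem_empty, iff_false]
  rintro ⟨hin, hocc, hik, hki⟩
  rw [show ((w <+: x.drop i) = occursAt w x i) from rfl, occ_iff hw] at hocc
  have := hocc.2 (k - i) (by omega)
  rw [show i + (k - i) = k by omega, hb, hrep (k-i) (by omega)] at this
  simp at this

lemma spn_subset_cov {w x : List Bool} {k : ℕ} {b : Bool} (hw : 0 < w.length)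
    (hk : k < x.length) (hb : x.getD k false = b)
    (hrep : ∀ d < w.length, w.getD d false = b) :
    spn w x k ⊆ cov w x k := by
  have hzd := getD_erase x k hk
  intro j hj
  simp only [spn, Finset.mem_filter, Finset.mem_range] at hj
  obtain ⟨hjn, hocc, hjk, hkj⟩ := hj
  rw [show ((w <+: (x.eraseIdx k).drop j) = occursAt w (x.eraseIdx k) j) from rfl, occ_iff hw] at hocc
  obtain ⟨hlen, hval⟩ := hocc
  have hzl : (x.eraseIdx k).length = x.length - 1 := by rw [List.length_eraseIdx]; simp [hk]
  simp only [cov, Finset.mem_filter, Finset.mem_range]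
  refine ⟨by omega, ?_, by omega, by omega⟩
  rw [show ((w <+: x.drop j) = occursAt w x j) from rfl, occ_iff hw]
  refine ⟨by omega, fun d hd => ?_⟩
  rw [hrep d hd]
  rcases Nat.lt_trichotomy (j + d) k with h | h | h
  · have := hval d hd
    rw [hzd, if_pos h, hrep d hd] at this
    exact this
  · rw [h]; exact hb
  · have hd1 : 1 ≤ d := by omega
    have := hval (d-1) (by omega)
    rw [hzd, if_neg (by omega), show j + (d-1) + 1 = j + d by omega, hrep (d-1) (by omega)] at this
    exact this

lemma spn_card_succ_le {w x : List Bool} {k : ℕ} {b : Bool} (hw : 0 < w.length)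
    (hk : k < x.length) (hb : x.getD k false = b)
    (hrep : ∀ d < w.length, w.getD d false = b)
    (hne : (cov w x k).Nonempty) :
    (spn w x k).card + 1 ≤ (cov w x k).card := by
  have hzd := getD_erase x k hk
  have hzl : (x.eraseIdx k).length = x.length - 1 := by rw [List.length_eraseIdx]; simp [hk]
  set M := (cov w x k).max' hne with hM
  have hMmem := (cov w x k).max'_mem hne
  have hsub : spn w x k ⊆ (cov w x k).erase M := by
    intro j hj
    have hjc := spn_subset_cov hw hk hb hrep hj
    rw [Finset.mem_erase]
    refine ⟨?_, hjc⟩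
    intro hjM
    -- then j+1 ∈ cov, contradicting maximality
    simp only [spn, Finset.mem_filter, Finset.mem_range] at hj
    obtain ⟨hjn, hocc, hjk, hkj⟩ := hj
    rw [show ((w <+: (x.eraseIdx k).drop j) = occursAt w (x.eraseIdx k) j) from rfl, occ_iff hw] at hocc
    obtain ⟨hlen, hval⟩ := hocc
    have hmem : j + 1 ∈ cov w x k := by
      simp only [cov, Finset.mem_filter, Finset.mem_range]
      refine ⟨by omega, ?_, by omega, by omega⟩
      rw [show ((w <+: x.drop (j+1)) = occursAt w x (j+1)) from rfl, occ_iff hw]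
      refine ⟨by omega, fun d hd => ?_⟩
      rw [hrep d hd]
      rcases Nat.lt_trichotomy (j + 1 + d) k with h | h | h
      · have := hval (d+1) (by omega)
        rw [hzd, if_pos (by omega), hrep (d+1) (by omega),
          show j + (d+1) = j + 1 + d by omega] at this
        exact this
      · rw [h]; exact hb
      · have := hval d hd
        rw [hzd, if_neg (by omega), show j + d + 1 = j + 1 + d by omega, hrep d hd] at this
        exact this
    have := Finset.le_max' _ _ hmem
    omega
  have := Finset.card_le_card hsub
  rw [Finset.card_erase_of_mem hMmem] at this
  have hpos : 0 < (cov w x k).card := Finset.card_pos.mpr hne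
  omega


lemma map_getD_range (x : List Bool) (c m : ℕ) (h : c + m ≤ x.length) :
    (List.range m).map (fun t => x.getD (c + t) false) = (x.drop c).take m := by
  apply List.ext_getElem
  · simp; omega
  · intro d h1 h2
    simp only [List.getElem_map, List.getElem_range, List.getElem_take, List.getElem_drop]
    rw [List.getD_eq_getElem _ _ (by simp at h1; omega)]

lemma deleteIdxs_pair (x : List Bool) (i j : ℕ) (hij : i < j) (hj : j < x.length) :
    deleteIdxs x ({i, j} : Finset ℕ) =
      x.take i ++ ((x.drop (i+1)).take (j - i - 1)) ++ x.drop (j+1) := by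
  set n := x.length with hn
  set p : ℕ → Bool := fun m => decide (m ∉ ({i, j} : Finset ℕ)) with hp
  have hpval : ∀ a, p a = true ↔ (a ≠ i ∧ a ≠ j) := by
    intro a; simp [hp]
  have e0 : List.range n = List.range (j+1) ++ (List.range (n-j-1)).map (fun t => (j+1)+t) := by
    conv_lhs => rw [show n = (j+1) + (n-j-1) by omega]
    exact List.range_add
  have e2 : List.range j = List.range (i+1) ++ (List.range (j-i-1)).map (fun t => (i+1)+t) := by
    conv_lhs => rw [show j = (i+1) + (j-i-1) by omega]
    exact List.range_add
  have p1 : (List.range i).filter p = List.range i := by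
    rw [List.filter_eq_self]
    intro a ha
    simp only [List.mem_range] at ha
    rw [hpval]; omega
  have p2 : [i].filter p = [] := by
    have : p i = false := by simp [hp]
    simp [List.filter_singleton, this]
  have p4 : [j].filter p = [] := by
    have : p j = false := by simp [hp]
    simp [List.filter_singleton, this]
  have p3 : ((List.range (j-i-1)).map (fun t => (i+1)+t)).filter p
      = (List.range (j-i-1)).map (fun t => (i+1)+t) := by
    rw [List.filter_eq_self]
    intro a ha
    simp only [List.mem_map, List.mem_range] at ha
    obtain ⟨t, ht, rfl⟩ := ha
    rw [hpval]; omega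
  have p5 : ((List.range (n-j-1)).map (fun t => (j+1)+t)).filter p
      = (List.range (n-j-1)).map (fun t => (j+1)+t) := by
    rw [List.filter_eq_self]
    intro a ha
    simp only [List.mem_map, List.mem_range] at ha
    obtain ⟨t, ht, rfl⟩ := ha
    rw [hpval]; omega
  have hfil : (List.range n).filter p
      = List.range i ++ ((List.range (j - i - 1)).map (fun t => (i+1)+t))
        ++ (List.range (n - j - 1)).map (fun t => (j+1)+t) := by
    rw [e0, List.range_succ, e2, List.range_succ]
    simp only [List.filter_append, p1, p2, p3, p4, p5, List.append_nil, List.append_assoc,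
      List.nil_append]
  show ((List.range n).filter p).map (fun m => x.getD m false) = _
  rw [hfil]
  simp only [List.map_append, List.map_map]
  congr 1
  · congr 1
    · have := map_getD_range x 0 i (by omega)
      simpa using this
    · have := map_getD_range x (i+1) (j-i-1) (by omega)
      rw [← this]
      rfl
  · have := map_getD_range x (j+1) (n-j-1) (by omega)
    have h2 : (x.drop (j+1)).take (n-j-1) = x.drop (j+1) := by
      apply List.take_of_length_le
      simp
      omega
    rw [← h2, ← this]
    rfl

lemma erase_erase_max (x : List Bool) (i j : ℕ) (hij : i < j) (hj : j < x.length) :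
    (x.eraseIdx j).eraseIdx i =
      x.take i ++ ((x.drop (i+1)).take (j - i - 1)) ++ x.drop (j+1) := by
  rw [List.eraseIdx_eq_take_drop_succ, List.eraseIdx_eq_take_drop_succ]
  have hlt : (x.take j).length = j := by simp; omega
  rw [List.take_append, List.drop_append, hlt,
    show i - j = 0 by omega, show i + 1 - j = 0 by omega]
  simp only [List.take_zero, List.append_nil, List.drop_zero]
  rw [List.take_take, show i ⊓ j = i by omega, List.drop_take, List.append_assoc,
    show j - (i+1) = j - i - 1 by omega]

lemma erase_erase_min (x : List Bool) (i j : ℕ) (hij : i < j) (hj : j < x.length) :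
    (x.eraseIdx i).eraseIdx (j-1) =
      x.take i ++ ((x.drop (i+1)).take (j - i - 1)) ++ x.drop (j+1) := by
  rw [List.eraseIdx_eq_take_drop_succ, List.eraseIdx_eq_take_drop_succ]
  have hlt : (x.take i).length = i := by simp; omega
  rw [List.take_append, List.drop_append, hlt,
    show j - 1 + 1 = j by omega]
  rw [List.take_of_length_le (by simp; omega : (x.take i).length ≤ j - 1),
    List.drop_eq_nil_of_le (by simp; omega : (x.take i).length ≤ j), List.nil_append,
    List.drop_drop, List.append_assoc, show j - 1 - i = j - i - 1 by omega,
    show i + 1 + (j - i) = j + 1 by omega]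
  rw [List.append_assoc]

/-- If a `0` and a `1` are deleted with `N₀₀₀₀(x) - N₀₀₀₀(y) ≡ 1 (mod 7)` and
`N₁₁₁₁(x) ≡ N₁₁₁₁(y) (mod 7)`, then `1111` is preserved. -/
theorem zero_one_1111_preserved (x y : List Bool) (k₀ k₁ : ℕ) (hne : k₀ ≠ k₁)
    (h0 : k₀ < x.length) (h1 : k₁ < x.length)
    (hv0 : x.getD k₀ false = false) (hv1 : x.getD k₁ false = true)
    (hy : y = deleteIdxs x ({k₀, k₁} : Finset ℕ))
    (hm0 : Nw w0000 x ≡ Nw w0000 y + 1 [MOD 7])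
    (hm1 : Nw w1111 x ≡ Nw w1111 y [MOD 7]) :
    Preserved w1111 x y := by
  have hw0 : 0 < w0000.length := by decide
  have hw1 : 0 < w1111.length := by decide
  have hl0 : w0000.length = 4 := rfl
  have hl1 : w1111.length = 4 := rfl
  have hbrep0 : ∀ d < w0000.length, w0000.getD d false = false := by decide
  have hbrep1 : ∀ d < w1111.length, w1111.getD d false = true := by decide
  set n := x.length with hn
  have hn2 : 2 ≤ n := by omega
  have hkk : k₀ < k₁ ∨ k₁ < k₀ := hne.lt_or_gt
  obtain ⟨k0u, hk0u_def⟩ : ∃ m, (k₀ < k₁ ∧ m = k₀) ∨ (k₁ < k₀ ∧ m = k₀ - 1) := by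
    rcases hkk with h | h
    · exact ⟨k₀, Or.inl ⟨h, rfl⟩⟩
    · exact ⟨k₀ - 1, Or.inr ⟨h, rfl⟩⟩
  obtain ⟨k1v, hk1v_def⟩ : ∃ m, (k₁ < k₀ ∧ m = k₁) ∨ (k₀ < k₁ ∧ m = k₁ - 1) := by
    rcases hkk with h | h
    · exact ⟨k₁ - 1, Or.inr ⟨h, rfl⟩⟩
    · exact ⟨k₁, Or.inl ⟨h, rfl⟩⟩
  have hul : (x.eraseIdx k₁).length = n - 1 := by
    rw [List.length_eraseIdx, if_pos h1]
  have hvl : (x.eraseIdx k₀).length = n - 1 := by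
    rw [List.length_eraseIdx, if_pos h0]
  have hk0u : k0u < (x.eraseIdx k₁).length := by
    rw [hul]; rcases hk0u_def with ⟨h, rfl⟩ | ⟨h, rfl⟩ <;> omega
  have hk1v : k1v < (x.eraseIdx k₀).length := by
    rw [hvl]; rcases hk1v_def with ⟨h, rfl⟩ | ⟨h, rfl⟩ <;> omega
  have hud := getD_erase x k₁ h1
  have hvd := getD_erase x k₀ h0
  have hyu : y = (x.eraseIdx k₁).eraseIdx k0u := by
    rcases hk0u_def with ⟨h, heq⟩ | ⟨h, heq⟩
    · rw [heq, hy, deleteIdxs_pair x k₀ k₁ h h1, erase_erase_max x k₀ k₁ h h1]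
    · rw [heq, hy, Finset.pair_comm, deleteIdxs_pair x k₁ k₀ h h0, erase_erase_min x k₁ k₀ h h0]
  have hyv : y = (x.eraseIdx k₀).eraseIdx k1v := by
    rcases hk1v_def with ⟨h, heq⟩ | ⟨h, heq⟩
    · rw [heq, hy, Finset.pair_comm, deleteIdxs_pair x k₁ k₀ h h0, erase_erase_max x k₁ k₀ h h0]
    · rw [heq, hy, deleteIdxs_pair x k₀ k₁ h h1, erase_erase_min x k₀ k₁ h h1]
  have hyd : ∀ t, y.getD t false =
      if t < k0u then (x.eraseIdx k₁).getD t false else (x.eraseIdx k₁).getD (t+1) false := by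
    intro t; rw [hyu]; exact getD_erase _ k0u hk0u t
  -- zero-side counting
  have c1 := count_lemma w0000 x k₁ hw0 h1
  have hcz1 : cov w0000 x k₁ = ∅ :=
    cov_empty_of_ne (b := true) hw0 hv1 (by decide)
  rw [hcz1, Finset.card_empty, add_zero] at c1
  have c2 := count_lemma w0000 (x.eraseIdx k₁) k0u hw0 hk0u
  rw [← hyu] at c2
  have b1 : (spn w0000 x k₁).card ≤ 3 := by
    have := spn_card_le w0000 x k₁; rw [hl0] at this; omega
  have b2 : (spn w0000 (x.eraseIdx k₁) k0u).card ≤ 3 := by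
    have := spn_card_le w0000 (x.eraseIdx k₁) k0u; rw [hl0] at this; omega
  have b3 : (cov w0000 (x.eraseIdx k₁) k0u).card ≤ 4 := by
    have := cov_card_le w0000 (x.eraseIdx k₁) k0u; rw [hl0] at this; omega
  have hu0val : (x.eraseIdx k₁).getD k0u false = false := by
    rcases hk0u_def with ⟨h, rfl⟩ | ⟨h, rfl⟩
    · rw [hud, if_pos h]; exact hv0
    · rw [hud, if_neg (by omega), show k₀ - 1 + 1 = k₀ by omega]; exact hv0
  have b4 : (spn w0000 (x.eraseIdx k₁) k0u).card ≤ (cov w0000 (x.eraseIdx k₁) k0u).card :=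
    Finset.card_le_card (spn_subset_cov hw0 hk0u hu0val hbrep0)
  have key0 : (cov w0000 (x.eraseIdx k₁) k0u).card =
      (spn w0000 (x.eraseIdx k₁) k0u).card + (spn w0000 x k₁).card + 1 := by
    have hd := hm0.dvd
    push_cast at hd
    omega
  have hns : ¬ (cov w0000 (x.eraseIdx k₁) k0u ⊆ spn w0000 x k₁) := by
    intro hsub; have := Finset.card_le_card hsub; omega
  obtain ⟨m, hmc, hms⟩ := Finset.not_subset.mp hns
  simp only [cov, Finset.mem_filter, Finset.mem_range] at hmc
  obtain ⟨hmr, hmoccP, hmk1, hmk2⟩ := hmc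
  have hmocc := hmoccP
  rw [show ((w0000 <+: (x.eraseIdx k₁).drop m) = occursAt w0000 (x.eraseIdx k₁) m) from rfl,
    occ_iff hw0] at hmocc
  obtain ⟨hmlen, hmval0⟩ := hmocc
  have hmval : ∀ d < 4, (x.eraseIdx k₁).getD (m+d) false = false := by
    intro d hd
    rw [hmval0 d (by omega), hbrep0 d (by omega)]
  have hnospan : ¬ (m < k₁ ∧ k₁ < m + 4) := by
    rintro ⟨hs1, hs2⟩
    apply hms
    simp only [spn, Finset.mem_filter, Finset.mem_range]
    exact ⟨hmr, hmoccP, hs1, by rw [hl0]; exact hs2⟩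
  obtain ⟨i₀, hi₀v, hi₀l, hi₀a, hi₀b⟩ :
      ∃ i₀, (∀ d < 4, x.getD (i₀+d) false = false) ∧ i₀ + 4 ≤ n ∧ i₀ ≤ k₀ ∧ k₀ < i₀ + 4 := by
    rcases Nat.lt_or_ge m k₁ with hmk | hmk
    · have h4 : m + 4 ≤ k₁ := by omega
      refine ⟨m, fun d hd => ?_, by omega, ?_, ?_⟩
      · have := hmval d hd
        rw [hud, if_pos (by omega)] at this; exact this
      · rcases hk0u_def with ⟨h, rfl⟩ | ⟨h, rfl⟩ <;> omega
      · rcases hk0u_def with ⟨h, rfl⟩ | ⟨h, rfl⟩ <;> omega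
    · refine ⟨m+1, fun d hd => ?_, ?_, ?_, ?_⟩
      · have := hmval d hd
        rw [hud, if_neg (by omega), show m + d + 1 = m + 1 + d by omega] at this; exact this
      · rw [hl0] at hmlen; rw [hul] at hmlen; omega
      · rcases hk0u_def with ⟨h, rfl⟩ | ⟨h, rfl⟩ <;> omega
      · rcases hk0u_def with ⟨h, rfl⟩ | ⟨h, rfl⟩ <;> omega
  have hnb : (1 ≤ k₀ ∧ x.getD (k₀-1) false = false) ∨ (x.getD (k₀+1) false = false) := by
    rcases Nat.lt_or_ge i₀ k₀ with h | h
    · left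
      refine ⟨by omega, ?_⟩
      have := hi₀v (k₀-1-i₀) (by omega)
      rw [show i₀ + (k₀-1-i₀) = k₀ - 1 by omega] at this; exact this
    · right
      have hik : i₀ = k₀ := by omega
      have := hi₀v 1 (by omega)
      rw [hik] at this; exact this
  -- one-side counting
  have c3 := count_lemma w1111 x k₀ hw1 h0
  have hcz3 : cov w1111 x k₀ = ∅ :=
    cov_empty_of_ne (b := false) hw1 hv0 (by decide)
  rw [hcz3, Finset.card_empty, add_zero] at c3
  have c4 := count_lemma w1111 (x.eraseIdx k₀) k1v hw1 hk1v
  rw [← hyv] at c4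
  have hval_v : (x.eraseIdx k₀).getD k1v false = true := by
    rcases hk1v_def with ⟨h, rfl⟩ | ⟨h, rfl⟩
    · rw [hvd, if_pos h]; exact hv1
    · rw [hvd, if_neg (by omega), show k₁ - 1 + 1 = k₁ by omega]; exact hv1
  have b5 : (spn w1111 x k₀).card ≤ 3 := by
    have := spn_card_le w1111 x k₀; rw [hl1] at this; omega
  have b6 : (spn w1111 (x.eraseIdx k₀) k1v).card ≤ (cov w1111 (x.eraseIdx k₀) k1v).card :=
    Finset.card_le_card (spn_subset_cov hw1 hk1v hval_v hbrep1)
  have b7 : (cov w1111 (x.eraseIdx k₀) k1v).card ≤ 4 := by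
    have := cov_card_le w1111 (x.eraseIdx k₀) k1v; rw [hl1] at this; omega
  have key1 : (cov w1111 (x.eraseIdx k₀) k1v).card =
      (spn w1111 (x.eraseIdx k₀) k1v).card + (spn w1111 x k₀).card := by
    have hd := hm1.dvd
    push_cast at hd
    omega
  have hsp30 : spn w1111 x k₀ = ∅ := by
    ext j
    simp only [spn, Finset.mem_filter, Finset.mem_range, Finset.notMem_empty, iff_false]
    rintro ⟨hjr, hoccP, hjk, hkj⟩
    rw [hl1] at hkj
    have hocc := hoccP
    rw [show ((w1111 <+: (x.eraseIdx k₀).drop j) = occursAt w1111 (x.eraseIdx k₀) j) from rfl,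
      occ_iff hw1] at hocc
    obtain ⟨hjl, hjv⟩ := hocc
    have hL : x.getD (k₀-1) false = true := by
      have := hjv (k₀-1-j) (by omega)
      rw [show j + (k₀-1-j) = k₀ - 1 by omega, hvd, if_pos (by omega),
        hbrep1 (k₀-1-j) (by omega)] at this
      exact this
    have hR : x.getD (k₀+1) false = true := by
      have := hjv (k₀-j) (by omega)
      rw [show j + (k₀-j) = k₀ by omega, hvd, if_neg (by omega),
        hbrep1 (k₀-j) (by omega)] at this
      exact this
    rcases hnb with ⟨_, hf⟩ | hf
    · rw [hf] at hL; exact absurd hL (by decide)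
    · rw [hf] at hR; exact absurd hR (by decide)
  have key1' : (cov w1111 (x.eraseIdx k₀) k1v).card =
      (spn w1111 (x.eraseIdx k₀) k1v).card := by
    rw [key1, hsp30]; simp
  have hG1 : ∀ i, (∀ d < 4, x.getD (i+d) false = true) → ¬(i ≤ k₁ ∧ k₁ < i + 4) := by
    rintro i hvals ⟨hik, hki⟩
    have hk0out : k₀ < i ∨ i + 4 ≤ k₀ := by
      by_contra hc
      push_neg at hc
      obtain ⟨hc1, hc2⟩ := hc
      have := hvals (k₀ - i) (by omega)
      rw [show i + (k₀-i) = k₀ by omega, hv0] at this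
      exact absurd this (by decide)
    have hmem : (cov w1111 (x.eraseIdx k₀) k1v).Nonempty := by
      rcases hk0out with h | h
      · refine ⟨i-1, ?_⟩
        have hi3 : i + 3 < n := getD_true_lt (hvals 3 (by omega))
        simp only [cov, Finset.mem_filter, Finset.mem_range]
        refine ⟨by rw [hvl]; omega, ?_, ?_, ?_⟩
        · show occursAt w1111 (x.eraseIdx k₀) (i-1)
          rw [occ_iff hw1]
          refine ⟨by rw [hl1, hvl]; omega, fun d hd => ?_⟩
          rw [hl1] at hd
          rw [hvd, if_neg (by omega), show i-1+d+1 = i+d by omega, hbrep1 d (by omega)]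
          exact hvals d hd
        · rcases hk1v_def with ⟨hh, rfl⟩ | ⟨hh, rfl⟩ <;> omega
        · rw [hl1]; rcases hk1v_def with ⟨hh, rfl⟩ | ⟨hh, rfl⟩ <;> omega
      · refine ⟨i, ?_⟩
        simp only [cov, Finset.mem_filter, Finset.mem_range]
        refine ⟨by rw [hvl]; omega, ?_, ?_, ?_⟩
        · show occursAt w1111 (x.eraseIdx k₀) i
          rw [occ_iff hw1]
          refine ⟨by rw [hl1, hvl]; omega, fun d hd => ?_⟩
          rw [hl1] at hd
          rw [hvd, if_pos (by omega), hbrep1 d (by omega)]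
          exact hvals d hd
        · rcases hk1v_def with ⟨hh, rfl⟩ | ⟨hh, rfl⟩ <;> omega
        · rw [hl1]; rcases hk1v_def with ⟨hh, rfl⟩ | ⟨hh, rfl⟩ <;> omega
    have := spn_card_succ_le hw1 hk1v hval_v hbrep1 hmem
    omega
  -- junction values
  have hjun0 : junction ({k₀, k₁} : Finset ℕ) k₀ = k0u := by
    unfold junction
    have hsplit := Finset.card_filter_add_card_filter_not
      (s := Finset.range k₀) (p := fun m => m ∈ ({k₀, k₁} : Finset ℕ))
    rw [Finset.card_range] at hsplit
    rcases hk0u_def with ⟨h, heq⟩ | ⟨h, heq⟩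
    · have hpos : ((Finset.range k₀).filter (fun m => m ∈ ({k₀, k₁} : Finset ℕ))).card = 0 := by
        rw [Finset.card_eq_zero]
        ext mm
        simp only [Finset.mem_filter, Finset.mem_range, Finset.mem_insert,
          Finset.mem_singleton, Finset.notMem_empty, iff_false]
        omega
      omega
    · have hpos : ((Finset.range k₀).filter (fun m => m ∈ ({k₀, k₁} : Finset ℕ))).card = 1 := by
        rw [show (Finset.range k₀).filter (fun m => m ∈ ({k₀, k₁} : Finset ℕ)) = {k₁} from ?_]
        · exact Finset.card_singleton k₁
        · ext mm
          simp only [Finset.mem_filter, Finset.mem_range, Finset.mem_insert,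
            Finset.mem_singleton]
          omega
      omega
  have hjun1 : junction ({k₀, k₁} : Finset ℕ) k₁ = k1v := by
    unfold junction
    have hsplit := Finset.card_filter_add_card_filter_not
      (s := Finset.range k₁) (p := fun m => m ∈ ({k₀, k₁} : Finset ℕ))
    rw [Finset.card_range] at hsplit
    rcases hk1v_def with ⟨h, heq⟩ | ⟨h, heq⟩
    · have hpos : ((Finset.range k₁).filter (fun m => m ∈ ({k₀, k₁} : Finset ℕ))).card = 0 := by
        rw [Finset.card_eq_zero]
        ext mm
        simp only [Finset.mem_filter, Finset.mem_range, Finset.mem_insert,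
          Finset.mem_singleton, Finset.notMem_empty, iff_false]
        omega
      omega
    · have hpos : ((Finset.range k₁).filter (fun m => m ∈ ({k₀, k₁} : Finset ℕ))).card = 1 := by
        rw [show (Finset.range k₁).filter (fun m => m ∈ ({k₀, k₁} : Finset ℕ)) = {k₀} from ?_]
        · exact Finset.card_singleton k₀
        · ext mm
          simp only [Finset.mem_filter, Finset.mem_range, Finset.mem_insert,
            Finset.mem_singleton]
          omega
      omega
  -- no y-occurrence spans the zero junction
  have hJ0 : ∀ jj, occursAt w1111 y jj → ¬ (jj < k0u ∧ k0u < jj + 4) := by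
    rintro jj hocc ⟨hja, hjb⟩
    rw [occ_iff hw1] at hocc
    obtain ⟨hjl, hjv⟩ := hocc
    have hvals : ∀ d < 4, y.getD (jj+d) false = true := by
      intro d hd
      rw [hjv d (by omega), hbrep1 d (by omega)]
    rcases hnb with ⟨hk1', hf⟩ | hf
    · -- left neighbour zero
      have hzero : y.getD (k0u - 1) false = false := by
        rw [hyd, if_pos (by omega)]
        rcases hk0u_def with ⟨h, heq⟩ | ⟨h, heq⟩
        · rw [heq, hud, if_pos (by omega)]; exact hf
        · have hne2 : k₁ ≠ k₀ - 1 := by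
            intro hh; rw [hh] at hv1; rw [hv1] at hf; exact absurd hf (by decide)
          rw [heq, show k₀ - 1 - 1 = k₀ - 2 by omega, hud, if_neg (by omega),
            show k₀ - 2 + 1 = k₀ - 1 by omega]
          exact hf
      have := hvals (k0u - 1 - jj) (by omega)
      rw [show jj + (k0u - 1 - jj) = k0u - 1 by omega, hzero] at this
      exact absurd this (by decide)
    · -- right neighbour zero
      have hzero : y.getD k0u false = false := by
        rw [hyd, if_neg (by omega)]
        rcases hk0u_def with ⟨h, heq⟩ | ⟨h, heq⟩
        · have hne2 : k₁ ≠ k₀ + 1 := by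
            intro hh; rw [hh] at hv1; rw [hv1] at hf; exact absurd hf (by decide)
          rw [heq, hud, if_pos (by omega)]; exact hf
        · rw [heq, show k₀ - 1 + 1 = k₀ by omega, hud, if_neg (by omega)]; exact hf
      have := hvals (k0u - jj) (by omega)
      rw [show jj + (k0u - jj) = k0u by omega, hzero] at this
      exact absurd this (by decide)
  -- no y-occurrence spans the one junction
  have hJ1 : ∀ jj, occursAt w1111 y jj → ¬ (jj < k1v ∧ k1v < jj + 4) := by
    rintro jj hocc ⟨hja, hjb⟩
    by_cases hstrad : jj < k0u ∧ k0u < jj + 4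
    · exact hJ0 jj hocc hstrad
    push_neg at hstrad
    rw [occ_iff hw1] at hocc
    obtain ⟨hjl, hjv⟩ := hocc
    have hvals : ∀ d < 4, y.getD (jj+d) false = true := by
      intro d hd
      rw [hjv d (by omega), hbrep1 d (by omega)]
    rcases hk0u_def with ⟨h, hdef⟩ | ⟨h, hdef⟩
    · -- k₀ < k₁, k0u = k₀, k1v = k₁ - 1
      have hk1veq : k1v = k₁ - 1 := by
        rcases hk1v_def with ⟨hh, rfl⟩ | ⟨hh, rfl⟩ <;> omega
      have hjj : k0u ≤ jj := by omega
      refine hG1 (jj+1) (fun e he => ?_) ⟨by omega, by omega⟩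
      rcases Nat.lt_trichotomy (jj+1+e) k₁ with hcm | hcm | hcm
      · have := hvals e he
        rw [hyd, if_neg (by omega), hud, if_pos (by omega),
          show jj + e + 1 = jj + 1 + e by omega] at this
        exact this
      · rw [hcm]; exact hv1
      · have he1 : 1 ≤ e := by omega
        have := hvals (e-1) (by omega)
        rw [hyd, if_neg (by omega), hud, if_neg (by omega),
          show jj + (e-1) + 1 + 1 = jj + 1 + e by omega] at this
        exact this
    · -- k₁ < k₀, k0u = k₀ - 1, k1v = k₁
      have hk1veq : k1v = k₁ := by
        rcases hk1v_def with ⟨hh, rfl⟩ | ⟨hh, rfl⟩ <;> omega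
      have hjj : jj + 4 ≤ k0u := by omega
      refine hG1 jj (fun e he => ?_) ⟨by omega, by omega⟩
      rcases Nat.lt_trichotomy (jj+e) k₁ with hcm | hcm | hcm
      · have := hvals e he
        rw [hyd, if_pos (by omega), hud, if_pos (by omega)] at this
        exact this
      · rw [hcm]; exact hv1
      · have he1 : 1 ≤ e := by omega
        have := hvals (e-1) (by omega)
        rw [hyd, if_pos (by omega), hud, if_neg (by omega),
          show jj + (e-1) + 1 = jj + e by omega] at this
        exact this
  -- assemble
  refine ⟨{k₀, k₁}, ?_, ?_, hy.symm, ?_, ?_⟩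
  · intro k hk
    rcases Finset.mem_insert.mp hk with rfl | hk
    · exact h0
    · rw [Finset.mem_singleton] at hk; subst hk; exact h1
  · have hcard : ({k₀, k₁} : Finset ℕ).card = 2 := by
      rw [Finset.card_insert_of_notMem (by simpa using hne), Finset.card_singleton]
    have hylen : y.length = n - 2 := by
      rw [hyu, List.length_eraseIdx, if_pos hk0u, hul]
      omega
    rw [hcard, hylen]; omega
  · intro i hocc k hk
    rintro ⟨hik, hki⟩
    rw [hl1] at hki
    rw [occ_iff hw1] at hocc
    obtain ⟨hil, hiv⟩ := hocc
    have hvals : ∀ d < 4, x.getD (i+d) false = true := by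
      intro d hd
      rw [hiv d (by omega), hbrep1 d (by omega)]
    rcases Finset.mem_insert.mp hk with rfl | hk
    · have := hvals (k - i) (by omega)
      rw [show i + (k - i) = k by omega, hv0] at this
      exact absurd this (by decide)
    · rw [Finset.mem_singleton] at hk; subst hk
      exact hG1 i hvals ⟨hik, hki⟩
  · intro j hocc k hk
    rcases Finset.mem_insert.mp hk with rfl | hk
    · rw [hjun0, hl1]
      exact hJ0 j hocc
    · rw [Finset.mem_singleton] at hk; subst hk
      rw [hjun1, hl1]
      exact hJ1 j hocc
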